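/- All partial quotients a_k of the continued fraction of x(b), b ≥ 3, satisfy 1 ≤ a_k ≤ b + 2. -/

import Mathlib

/-- Partial quotients of x(b) via the folding recursion (fuel-based; fuel `k` suffices
since every recursive call has a strictly smaller index). -/
def cfAAux (b : ℤ) : ℕ → ℕ → ℤ
  | 0, _ => 0
  | fuel + 1, k =>
    if k = 0 then 0
    else if k = 1 then b - 1
    else if k = 2 then b + 2
    else
      let n := 2 ^ Nat.log2 (k - 1)
      if k = n + 1 then cfAAux b fuel n - 2
      else if k = 2 * n then cfAAux b fuel 1 + 1
      else cfAAux b fuel (2 * n + 1 - k)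

/-- `cfA b k` = the k-th partial quotient `a_k` of x(b). -/
def cfA (b : ℤ) (k : ℕ) : ℤ := cfAAux b k k

lemma n_facts {k : ℕ} (hk : 3 ≤ k) :
    2 ≤ 2 ^ Nat.log2 (k - 1) ∧ 2 ^ Nat.log2 (k - 1) ≤ k - 1 ∧
      k - 1 < 2 * 2 ^ Nat.log2 (k - 1) := by
  have hlog : Nat.log2 (k - 1) = Nat.log 2 (k - 1) := Nat.log2_eq_log_two
  have h1 : 2 ^ Nat.log2 (k - 1) ≤ k - 1 := by
    rw [hlog]; exact Nat.pow_log_le_self 2 (by omega)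
  have h2 : k - 1 < 2 * 2 ^ Nat.log2 (k - 1) := by
    have h := Nat.lt_pow_succ_log_self (by norm_num : 1 < 2) (k - 1)
    rw [pow_succ] at h
    rw [hlog]; omega
  have h3 : 1 ≤ Nat.log2 (k - 1) := by
    rw [hlog]
    exact (Nat.le_log_iff_pow_le (by norm_num) (by omega)).mpr (by omega)
  refine ⟨?_, h1, h2⟩
  calc 2 = 2 ^ 1 := rfl
    _ ≤ 2 ^ Nat.log2 (k - 1) := Nat.pow_le_pow_right (by norm_num) h3

lemma cfAAux_zero (b : ℤ) (f : ℕ) : cfAAux b f 0 = 0 := by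
  cases f <;> simp [cfAAux]

lemma cfAAux_stable (b : ℤ) : ∀ k f1 f2, k ≤ f1 → k ≤ f2 →
    cfAAux b f1 k = cfAAux b f2 k := by
  intro k
  induction k using Nat.strong_induction_on with
  | _ k ih =>
    intro f1 f2 h1 h2
    rcases Nat.eq_zero_or_pos k with rfl | hk
    · rw [cfAAux_zero, cfAAux_zero]
    obtain ⟨g1, rfl⟩ := Nat.exists_eq_succ_of_ne_zero (show f1 ≠ 0 by omega)
    obtain ⟨g2, rfl⟩ := Nat.exists_eq_succ_of_ne_zero (show f2 ≠ 0 by omega)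
    simp only [cfAAux]
    by_cases h0 : k = 0
    · simp [h0]
    by_cases hk1 : k = 1
    · simp [h0, hk1]
    by_cases hk2 : k = 2
    · simp [h0, hk1, hk2]
    simp only [h0, hk1, hk2, if_false]
    have hk3 : 3 ≤ k := by omega
    obtain ⟨hn2, hle, hlt⟩ := n_facts hk3
    set n := 2 ^ Nat.log2 (k - 1) with hn
    by_cases hA : k = n + 1
    · rw [if_pos hA, if_pos hA]
      rw [ih n (by omega) g1 g2 (by omega) (by omega)]
    rw [if_neg hA, if_neg hA]
    by_cases hB : k = 2 * n
    · rw [if_pos hB, if_pos hB]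
      rw [ih 1 (by omega) g1 g2 (by omega) (by omega)]
    rw [if_neg hB, if_neg hB]
    rw [ih (2 * n + 1 - k) (by omega) g1 g2 (by omega) (by omega)]

lemma pow_eq_double {l j : ℕ} (h1 : 2 ^ l < 2 ^ j) (h2 : 2 ^ j ≤ 2 * 2 ^ l) :
    2 ^ j = 2 * 2 ^ l := by
  have hl : l < j := (Nat.pow_lt_pow_iff_right (by norm_num)).mp h1
  have : 2 ^ (l + 1) ≤ 2 ^ j := Nat.pow_le_pow_right (by norm_num) hl
  rw [pow_succ] at this
  omega

lemma main_bounds (b : ℤ) (hb : 3 ≤ b) : ∀ k, 1 ≤ k →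
    (1 ≤ cfA b k ∧ cfA b k ≤ b + 2 ∧ ∀ j, 1 ≤ j → k = 2 ^ j → b ≤ cfA b k) := by
  intro k
  induction k using Nat.strong_induction_on with
  | _ k ih =>
    intro hk
    obtain ⟨f, rfl⟩ := Nat.exists_eq_succ_of_ne_zero (show k ≠ 0 by omega)
    simp only [Nat.succ_eq_add_one] at ih hk ⊢
    by_cases hk1 : f + 1 = 1
    · rw [hk1]
      have hv : cfA b 1 = b - 1 := by simp [cfA, cfAAux]
      rw [hv]
      refine ⟨by omega, by omega, ?_⟩
      intro j hj hj2
      have h2 : 2 ≤ 2 ^ j := by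
        calc 2 = 2 ^ 1 := rfl
          _ ≤ 2 ^ j := Nat.pow_le_pow_right (by norm_num) hj
      omega
    by_cases hk2 : f + 1 = 2
    · rw [hk2]
      have hv : cfA b 2 = b + 2 := by simp [cfA, cfAAux]
      rw [hv]
      exact ⟨by omega, by omega, fun j hj hj2 => by omega⟩
    have hk3 : 3 ≤ f + 1 := by omega
    obtain ⟨hn2, hle, hlt⟩ := n_facts hk3
    set n := 2 ^ Nat.log2 (f + 1 - 1) with hn
    have hlog1 : 1 ≤ Nat.log2 (f + 1 - 1) := by
      by_contra h
      have h0 : Nat.log2 (f + 1 - 1) = 0 := by omega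
      rw [h0] at hn
      omega
    have hunf : cfA b (f + 1) =
        (if f + 1 = n + 1 then cfAAux b f n - 2
         else if f + 1 = 2 * n then cfAAux b f 1 + 1
         else cfAAux b f (2 * n + 1 - (f + 1))) := by
      show cfAAux b (f + 1) (f + 1) = _
      simp only [cfAAux]
      rw [if_neg (show ¬ f + 1 = 0 by omega), if_neg hk1, if_neg hk2]
    by_cases hA : f + 1 = n + 1
    · rw [hunf, if_pos hA]
      rw [cfAAux_stable b n f n (by omega) (le_refl n)]
      have hihn := ih n (by omega) (by omega)
      have hbn : b ≤ cfA b n := hihn.2.2 (Nat.log2 (f + 1 - 1)) hlog1 hn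
      have hub : cfA b n ≤ b + 2 := hihn.2.1
      simp only [cfA] at hbn hub
      refine ⟨by omega, by omega, ?_⟩
      intro j hj hj2
      exfalso
      have heven : 2 ∣ n := by rw [hn]; exact dvd_pow_self 2 (by omega)
      have h2k : (2:ℕ) ∣ 2 ^ j := dvd_pow_self 2 (by omega)
      omega
    rw [hunf, if_neg hA]
    by_cases hB : f + 1 = 2 * n
    · rw [if_pos hB]
      have h1 : cfAAux b f 1 = b - 1 := by
        rw [cfAAux_stable b 1 f 1 (by omega) (le_refl 1)]
        simp [cfAAux]
      rw [h1]
      exact ⟨by omega, by omega, fun j hj hj2 => by omega⟩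
    rw [if_neg hB]
    have hm1 : 2 ≤ 2 * n + 1 - (f + 1) := by omega
    have hm2 : 2 * n + 1 - (f + 1) < f + 1 := by omega
    rw [cfAAux_stable b (2 * n + 1 - (f + 1)) f (2 * n + 1 - (f + 1)) (by omega) (le_refl _)]
    have hihm := ih (2 * n + 1 - (f + 1)) hm2 (by omega)
    have hl := hihm.1
    have hu := hihm.2.1
    simp only [cfA] at hl hu
    refine ⟨by omega, by omega, ?_⟩
    intro j hj hj2
    exfalso
    have h1 : n < 2 ^ j := by omega
    have h2 : 2 ^ j ≤ 2 * n := by omega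
    rw [hn] at h1 h2
    have := pow_eq_double h1 h2
    omega

theorem a_bounds (b : ℤ) (hb : 3 ≤ b) (k : ℕ) (hk : 1 ≤ k) :
    1 ≤ cfA b k ∧ cfA b k ≤ b + 2 := by
  obtain ⟨h1, h2, _⟩ := main_bounds b hb k hk
  exact ⟨h1, h2⟩
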